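/- arXiv:2002.10754 — 2 statements merged into one kernel-verified Lean document; each statement's English description precedes it below -/
import Mathlib

section
/- Let $H = (N-k-2)/2 > 0$, $\mu < H^2$, $\alpha_- = H - \sqrt{H^2-\mu}$, and let $d$ be a $C^2$ positive function with $|\nabla d| = 1$ and $\Delta d = \frac{N-k-1}{d} + g$, $g$ bounded. Then for every $\varepsilon \in (0,1)$ there exists $\beta > 0$ such that on $\{0 < d < \beta\}$ the function $\eta = d^{-\alpha_-} - d^{-\alpha_-+\varepsilon}$ satisfies $\eta \geq 0$ and $-\Delta\eta - \mu d^{-2}\eta \geq 0$. -/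
noncomputable def lap {n : ℕ} (f : EuclideanSpace ℝ (Fin n) → ℝ)
    (x : EuclideanSpace ℝ (Fin n)) : ℝ :=
  ∑ i : Fin n,
    fderiv ℝ (fun y => fderiv ℝ f y (EuclideanSpace.single i 1)) x (EuclideanSpace.single i 1)

noncomputable def gradNormSq {n : ℕ} (f : EuclideanSpace ℝ (Fin n) → ℝ)
    (x : EuclideanSpace ℝ (Fin n)) : ℝ :=
  ∑ i : Fin n, (fderiv ℝ f x (EuclideanSpace.single i 1)) ^ 2

lemma lap_comp_rpow {N : ℕ} {U : Set (EuclideanSpace ℝ (Fin N))} (hU : IsOpen U)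
    {d : EuclideanSpace ℝ (Fin N) → ℝ} (hd2 : ContDiffOn ℝ 2 d U)
    (hdpos : ∀ y ∈ U, 0 < d y) {x} (hx : x ∈ U) (p q : ℝ) :
    lap (fun y => d y ^ p - d y ^ q) x =
      (p * d x ^ (p-1) - q * d x ^ (q-1)) * lap d x +
      (p*(p-1) * d x ^ (p-2) - q*(q-1) * d x ^ (q-2)) * gradNormSq d x := by
  have hmem := hU.mem_nhds hx
  have hdiff : ∀ y ∈ U, HasFDerivAt d (fderiv ℝ d y) y := fun y hy =>
    ((hd2.contDiffAt (hU.mem_nhds hy)).differentiableAt (by norm_num)).hasFDerivAt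
  have hcomp : ∀ y ∈ U, ∀ r : ℝ,
      HasFDerivAt (fun z => d z ^ r) ((r * d y ^ (r-1)) • fderiv ℝ d y) y := fun y hy r =>
    HasDerivAt.comp_hasFDerivAt y (Real.hasDerivAt_rpow_const (Or.inl (hdpos y hy).ne'))
      (hdiff y hy)
  have hη : ∀ y ∈ U, HasFDerivAt (fun z => d z ^ p - d z ^ q)
      ((p * d y ^ (p-1) - q * d y ^ (q-1)) • fderiv ℝ d y) y := by
    intro y hy
    have := (hcomp y hy p).sub (hcomp y hy q)
    rwa [← sub_smul] at this
  -- c : the outer-derivative coefficient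
  set c : EuclideanSpace ℝ (Fin N) → ℝ := fun y => p * d y ^ (p-1) - q * d y ^ (q-1) with hc
  have hcdiff : HasFDerivAt c
      ((p*(p-1) * d x ^ (p-2) - q*(q-1) * d x ^ (q-2)) • fderiv ℝ d x) x := by
    have h1 := (hcomp x hx (p-1)).const_mul p
    have h2 := (hcomp x hx (q-1)).const_mul q
    have h3 := h1.sub h2
    rw [smul_smul, smul_smul, ← sub_smul] at h3
    have e : p * ((p-1) * d x ^ (p-1-1)) - q * ((q-1) * d x ^ (q-1-1))
        = p*(p-1) * d x ^ (p-2) - q*(q-1) * d x ^ (q-2) := by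
      rw [show p-1-1 = p-2 by ring, show q-1-1 = q-2 by ring]; ring
    rwa [e] at h3
  have hBdiff : ∀ i : Fin N, DifferentiableAt ℝ
      (fun y => fderiv ℝ d y (EuclideanSpace.single i 1)) x := by
    intro i
    have h1 : ContDiffAt ℝ 1 (fderiv ℝ d) x :=
      (hd2.contDiffAt hmem).fderiv_right (by norm_num)
    exact (h1.differentiableAt (by norm_num)).clm_apply (differentiableAt_const _)
  have termeq : ∀ i : Fin N,
      fderiv ℝ (fun y => fderiv ℝ (fun z => d z ^ p - d z ^ q) y (EuclideanSpace.single i 1)) x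
        (EuclideanSpace.single i 1)
      = c x * fderiv ℝ (fun y => fderiv ℝ d y (EuclideanSpace.single i 1)) x
          (EuclideanSpace.single i 1)
        + (p*(p-1) * d x ^ (p-2) - q*(q-1) * d x ^ (q-2)) *
            (fderiv ℝ d x (EuclideanSpace.single i 1))^2 := by
    intro i
    have hFeq : (fun y => fderiv ℝ (fun z => d z ^ p - d z ^ q) y (EuclideanSpace.single i 1))
        =ᶠ[nhds x] fun y => c y * fderiv ℝ d y (EuclideanSpace.single i 1) :=
      Filter.eventuallyEq_of_mem hmem (fun y hy => by
        rw [(hη y hy).fderiv]; rfl)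
    rw [hFeq.fderiv_eq, fderiv_fun_mul hcdiff.differentiableAt (hBdiff i)]
    simp only [ContinuousLinearMap.add_apply, ContinuousLinearMap.smul_apply,
      hcdiff.fderiv, smul_eq_mul]
    ring
  show (∑ i : Fin N, fderiv ℝ (fun y => fderiv ℝ (fun z => d z ^ p - d z ^ q) y
      (EuclideanSpace.single i 1)) x (EuclideanSpace.single i 1)) = _
  rw [Finset.sum_congr rfl (fun i _ => termeq i), Finset.sum_add_distrib,
    ← Finset.mul_sum, ← Finset.mul_sum]
  rfl

theorem stmt_5 (N k : ℕ) (hN : 3 ≤ N) (hk : k + 2 < N)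
    (U : Set (EuclideanSpace ℝ (Fin N))) (hU : IsOpen U)
    (d g : EuclideanSpace ℝ (Fin N) → ℝ)
    (hd2 : ContDiffOn ℝ 2 d U) (hdpos : ∀ x ∈ U, 0 < d x)
    (hgrad : ∀ x ∈ U, gradNormSq d x = 1)
    (hgbd : ∃ M, ∀ x ∈ U, |g x| ≤ M)
    (hlapd : ∀ x ∈ U, lap d x = ((N : ℝ) - k - 1) / d x + g x)
    (H μ am : ℝ) (hH : H = ((N : ℝ) - k - 2) / 2) (hH0 : 0 < H)
    (hμ : μ < H ^ 2) (ham : am = H - Real.sqrt (H ^ 2 - μ)) :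
    ∀ ε : ℝ, 0 < ε → ε < 1 → ∃ β > (0 : ℝ), ∀ x ∈ U, d x < β →
      0 ≤ d x ^ (-am) - d x ^ (-am + ε) ∧
      0 ≤ -(lap (fun y => d y ^ (-am) - d y ^ (-am + ε)) x) -
            μ * d x ^ (-(2 : ℝ)) * (d x ^ (-am) - d x ^ (-am + ε)) := by
  obtain ⟨M₀, hM₀⟩ := hgbd
  set M : ℝ := max M₀ 0 with hMdef
  have hMnn : 0 ≤ M := le_max_right _ _
  have hgM : ∀ x ∈ U, |g x| ≤ M := fun x hx => (hM₀ x hx).trans (le_max_left _ _)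
  intro ε hε hε1
  have hμ' : 0 < H ^ 2 - μ := by linarith
  set s : ℝ := Real.sqrt (H ^ 2 - μ) with hsdef
  have hs2 : s ^ 2 = H ^ 2 - μ := Real.sq_sqrt hμ'.le
  have hspos : 0 < s := Real.sqrt_pos.mpr hμ'
  have hq : am ^ 2 - 2 * H * am + μ = 0 := by
    rw [ham]; linear_combination hs2
  have hham : H - am = s := by rw [ham]; ring
  set C : ℝ := ε ^ 2 + 2 * ε * (H - am) with hCdef
  have hCpos : 0 < C := by rw [hCdef, hham]; nlinarith
  set K : ℝ := M * (|am| + |am - ε|) + 1 with hKdef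
  have hKpos : 0 < K := by positivity
  have hCK : 0 < C / K := div_pos hCpos hKpos
  refine ⟨min 1 ((C / K) ^ (1 / (1 - ε)) : ℝ), lt_min one_pos (Real.rpow_pos_of_pos hCK _), ?_⟩
  intro x hx hxβ
  set t : ℝ := d x with htdef
  have ht : 0 < t := hdpos x hx
  have ht1 : t < 1 := lt_of_lt_of_le hxβ (min_le_left _ _)
  have hQP : t ^ (-am + ε) = t ^ (-am) * t ^ ε := Real.rpow_add ht _ _
  constructor
  · rw [hQP]
    nlinarith [Real.rpow_pos_of_pos ht (-am), Real.rpow_le_one ht.le ht1.le hε.le]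
  · have hlapc := lap_comp_rpow hU hd2 hdpos hx (-am) (-am + ε)
    set P : ℝ := t ^ (-am) with hPdef
    set Q : ℝ := t ^ (-am + ε) with hQdef
    have hP : 0 < P := Real.rpow_pos_of_pos ht _
    have hQ : 0 < Q := Real.rpow_pos_of_pos ht _
    have hp1 : t ^ (-am - 1) = P / t := by
      have h := Real.rpow_sub ht (-am) 1
      rw [Real.rpow_one] at h
      rw [hPdef, h]
    have hp2 : t ^ (-am - 2) = P / t ^ 2 := by
      have h := Real.rpow_sub ht (-am) 2
      rw [Real.rpow_two] at h
      rw [hPdef, h]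
    have hq1 : t ^ (-am + ε - 1) = Q / t := by
      have h := Real.rpow_sub ht (-am + ε) 1
      rw [Real.rpow_one] at h
      rw [hQdef, h]
    have hq2 : t ^ (-am + ε - 2) = Q / t ^ 2 := by
      have h := Real.rpow_sub ht (-am + ε) 2
      rw [Real.rpow_two] at h
      rw [hQdef, h]
    have hm2 : t ^ (-(2:ℝ)) = (t ^ 2)⁻¹ := by
      rw [Real.rpow_neg ht.le, Real.rpow_two]
    have hn1 : ((N : ℝ) - k - 1) = 2 * H + 1 := by rw [hH]; ring
    rw [hlapc, hlapd x hx, hgrad x hx, hn1, hp1, hp2, hq1, hq2, hm2]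
    have key : -(((-am) * (P / t) - (-am + ε) * (Q / t)) * ((2 * H + 1) / t + g x)
          + ((-am) * (-am - 1) * (P / t ^ 2) - (-am + ε) * (-am + ε - 1) * (Q / t ^ 2)) * 1)
          - μ * (t ^ 2)⁻¹ * (P - Q)
        = (C * Q - g x * ((-am) * (t * P) - (-am + ε) * (t * Q))) / t ^ 2 := by
      field_simp
      linear_combination (Q - P) * hq
    rw [key]
    apply div_nonneg _ (sq_nonneg t)
    -- bound the g-term
    have e1 : t * Q ≤ t ^ (1 - ε) * Q := by
      have : t ^ (1:ℝ) ≤ t ^ (1 - ε) :=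
        Real.rpow_le_rpow_of_exponent_ge ht ht1.le (by linarith)
      rw [Real.rpow_one] at this
      exact mul_le_mul_of_nonneg_right this hQ.le
    have e2 : t * P = t ^ (1 - ε) * Q := by
      have : t ^ (1 - ε) * Q = t * P := by
        rw [hPdef, hQdef, ← Real.rpow_add ht,
          show (1 - ε) + (-am + ε) = 1 + -am by ring, Real.rpow_add ht, Real.rpow_one]
      exact this.symm
    have e3 : t ^ (1 - ε) ≤ C / K := by
      calc t ^ (1 - ε) ≤ ((C / K) ^ (1 / (1 - ε))) ^ (1 - ε) := by
            apply Real.rpow_le_rpow ht.le (le_of_lt (lt_of_lt_of_le hxβ (min_le_right _ _)))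
              (by linarith)
        _ = C / K := by
            rw [← Real.rpow_mul hCK.le,
              show (1 / (1 - ε)) * (1 - ε) = 1 by
                rw [one_div, inv_mul_cancel₀ (by linarith : (1:ℝ) - ε ≠ 0)], Real.rpow_one]
    -- now conclude:  g x * (-am*(t*P) - (-am+ε)*(t*Q)) ≤ C * Q
    have hTP : 0 < t * P := mul_pos ht hP
    have hTQ : 0 < t * Q := mul_pos ht hQ
    have hgx := hgM x hx
    have b1 : g x * ((-am) * (t * P)) ≤ M * (|am| * (t * P)) := by
      calc g x * ((-am) * (t * P)) ≤ |g x * ((-am) * (t * P))| := le_abs_self _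
        _ = |g x| * (|am| * (t * P)) := by
            rw [abs_mul, abs_mul, abs_neg, abs_of_pos hTP]
        _ ≤ M * (|am| * (t * P)) := by
            apply mul_le_mul_of_nonneg_right hgx (by positivity)
    have b2 : -(g x * ((-am + ε) * (t * Q))) ≤ M * (|am - ε| * (t * Q)) := by
      calc -(g x * ((-am + ε) * (t * Q))) ≤ |g x * ((-am + ε) * (t * Q))| := neg_le_abs _
        _ = |g x| * (|am - ε| * (t * Q)) := by
            rw [abs_mul, abs_mul, abs_of_pos hTQ, show -am + ε = -(am - ε) by ring, abs_neg]
        _ ≤ M * (|am - ε| * (t * Q)) := by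
            apply mul_le_mul_of_nonneg_right hgx (by positivity)
    have hKC : K * t ^ (1 - ε) ≤ C := by
      have := mul_le_mul_of_nonneg_left e3 hKpos.le
      rwa [mul_div_cancel₀ _ hKpos.ne'] at this
    have htQpos : 0 ≤ t ^ (1 - ε) * Q :=
      mul_nonneg (Real.rpow_pos_of_pos ht _).le hQ.le
    have hsum : g x * ((-am) * (t * P) - (-am + ε) * (t * Q))
        ≤ M * (|am| * (t * P)) + M * (|am - ε| * (t * Q)) := by
      calc g x * ((-am) * (t * P) - (-am + ε) * (t * Q))
          = g x * ((-am) * (t * P)) + -(g x * ((-am + ε) * (t * Q))) := by ring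
        _ ≤ _ := add_le_add b1 b2
    have h5 : M * (|am| * (t * P)) = (M * |am|) * (t ^ (1 - ε) * Q) := by rw [e2]; ring
    have h6 : M * (|am - ε| * (t * Q)) ≤ (M * |am - ε|) * (t ^ (1 - ε) * Q) := by
      calc M * (|am - ε| * (t * Q)) = (M * |am - ε|) * (t * Q) := by ring
        _ ≤ _ := mul_le_mul_of_nonneg_left e1 (by positivity)
    have h7 : M * |am| + M * |am - ε| = K - 1 := by rw [hKdef]; ring
    have h8 : (M * |am| + M * |am - ε|) * (t ^ (1 - ε) * Q) ≤ K * (t ^ (1 - ε) * Q) := by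
      apply mul_le_mul_of_nonneg_right _ htQpos
      linarith
    have h9 : K * (t ^ (1 - ε) * Q) ≤ C * Q := by
      calc K * (t ^ (1 - ε) * Q) = (K * t ^ (1 - ε)) * Q := by ring
        _ ≤ C * Q := mul_le_mul_of_nonneg_right hKC hQ.le
    linarith only [hsum, h5, h6, h8, h9]
end

section
/- Let $N \geq 3$, $k$ integer with $0 \leq k < N-2$, $0 < \alpha < \gamma < N$, $\alpha < N-k$, and $K = \mathbb{R}^k \times \{0\} \subset \mathbb{R}^N$. Fix $x \in \mathbb{R}^N \setminus K$ and $\lambda > 0$, and set $A_\lambda(x) = \{ y \in B(0,1) \setminus \{x\} : |x-y|^{-N+\gamma} > \lambda \}$. Then there is a constant $C = C(N,k,\alpha,\gamma)$ such that $\int_{A_\lambda(x)} |y''|^{-\alpha}\, dy \leq C\, \lambda^{-\frac{N-\alpha}{N-\gamma}}$. -/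
open MeasureTheory Metric Set
open scoped ENNReal NNReal

lemma ball_rpow_bound (ι : Type*) [Fintype ι] [Nonempty ι] (α : ℝ) (hα : 0 < α)
    (hαm : α < Fintype.card ι) :
    ∃ D : ℝ≥0∞, D ≠ ∞ ∧ ∀ t : ℝ, 0 < t →
      (∫⁻ z in Metric.ball (0 : EuclideanSpace ℝ ι) t, ENNReal.ofReal (‖z‖ ^ (-α))) ≤
        ENNReal.ofReal (t ^ ((Fintype.card ι : ℝ) - α)) * D := by
  classical
  set m := Fintype.card ι with hmdef
  set F := EuclideanSpace ℝ ι
  have hm1 : 1 ≤ m := Fintype.card_pos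
  have hfr : Module.finrank ℝ F = m := finrank_euclideanSpace
  set B := volume (Metric.ball (0 : F) 1) with hB
  set q : ℝ := -((m : ℝ) / α) with hq
  have hq1 : q < -1 := by
    rw [hq, neg_lt_neg_iff]
    exact (one_lt_div hα).2 hαm
  refine ⟨B + ENNReal.ofReal ((-(q + 1))⁻¹) * B, ?_, ?_⟩
  · refine ENNReal.add_ne_top.2 ⟨measure_ball_lt_top.ne, ENNReal.mul_ne_top
      ENNReal.ofReal_ne_top measure_ball_lt_top.ne⟩
  intro t ht
  have hmeas : Measurable fun z : F => ‖z‖ ^ (-α) := by fun_prop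
  rw [lintegral_eq_lintegral_meas_le _ (Filter.Eventually.of_forall fun z =>
    Real.rpow_nonneg (norm_nonneg z) _) hmeas.aemeasurable]
  set ν := (volume : Measure F).restrict (Metric.ball (0 : F) t) with hν
  set s₀ : ℝ := t ^ (-α) with hs₀
  have hs₀pos : 0 < s₀ := Real.rpow_pos_of_pos ht _
  have hball : volume (Metric.ball (0 : F) t) = ENNReal.ofReal (t ^ m) * B := by
    rw [hB, ← hfr, Measure.addHaar_ball _ _ ht.le]
  have hsubset : ∀ s : ℝ, 0 < s →
      {a : F | s ≤ ‖a‖ ^ (-α)} ⊆ Metric.closedBall 0 (s ^ (-α⁻¹)) := by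
    intro s hs a ha
    simp only [mem_setOf_eq] at ha
    rcases eq_or_ne a 0 with rfl | ha0
    · simp only [norm_zero] at ha
      rw [Real.zero_rpow (neg_ne_zero.2 hα.ne')] at ha
      exact absurd (hs.trans_le ha) (lt_irrefl 0)
    · have hna : 0 < ‖a‖ := norm_pos_iff.2 ha0
      rw [mem_closedBall_zero_iff]
      have h1 : ‖a‖ ^ α ≤ s⁻¹ := by
        rw [Real.rpow_neg hna.le] at ha
        calc ‖a‖ ^ α = ((‖a‖ ^ α)⁻¹)⁻¹ := (inv_inv _).symm
        _ ≤ s⁻¹ := by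
          apply inv_anti₀ hs ha
      calc ‖a‖ = (‖a‖ ^ α) ^ α⁻¹ := by
            rw [← Real.rpow_mul hna.le, mul_inv_cancel₀ hα.ne', Real.rpow_one]
        _ ≤ (s⁻¹) ^ α⁻¹ := Real.rpow_le_rpow (by positivity) h1 (by positivity)
        _ = s ^ (-α⁻¹) := by rw [← Real.rpow_neg_one s, ← Real.rpow_mul hs.le]; ring_nf
  calc ∫⁻ s in Ioi (0:ℝ), ν {a : F | s ≤ ‖a‖ ^ (-α)}
      ≤ ∫⁻ s in Ioc 0 s₀ ∪ Ioi s₀, ν {a : F | s ≤ ‖a‖ ^ (-α)} :=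
        lintegral_mono_set Ioi_subset_Ioc_union_Ioi
    _ ≤ (∫⁻ s in Ioc 0 s₀, ν {a : F | s ≤ ‖a‖ ^ (-α)})
        + ∫⁻ s in Ioi s₀, ν {a : F | s ≤ ‖a‖ ^ (-α)} := lintegral_union_le _ _ _
    _ ≤ ENNReal.ofReal (t ^ ((m:ℝ) - α)) * B
        + ENNReal.ofReal (t ^ ((m:ℝ) - α)) * (ENNReal.ofReal ((-(q + 1))⁻¹) * B) := by
        gcongr ?_ + ?_
        · calc (∫⁻ s in Ioc 0 s₀, ν {a : F | s ≤ ‖a‖ ^ (-α)})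
              ≤ ∫⁻ _ in Ioc 0 s₀, volume (Metric.ball (0 : F) t) := by
                refine lintegral_mono fun s => ?_
                exact le_trans (measure_mono (subset_univ _))
                  (by rw [hν, Measure.restrict_apply_univ])
            _ = volume (Metric.ball (0 : F) t) * ENNReal.ofReal s₀ := by
                rw [setLIntegral_const, Real.volume_Ioc, sub_zero]
            _ = ENNReal.ofReal (t ^ ((m:ℝ) - α)) * B := by
                rw [hball, mul_comm (ENNReal.ofReal (t ^ m)) B, mul_assoc,
                  ← ENNReal.ofReal_mul (by positivity), mul_comm B, hs₀]
                congr 2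
                rw [← Real.rpow_natCast t m, ← Real.rpow_add ht]
                ring_nf
        · calc (∫⁻ s in Ioi s₀, ν {a : F | s ≤ ‖a‖ ^ (-α)})
              ≤ ∫⁻ s in Ioi s₀, ENNReal.ofReal (s ^ q) * B := by
                refine setLIntegral_mono (by fun_prop) fun s hs => ?_
                have hspos : 0 < s := hs₀pos.trans hs
                calc ν {a : F | s ≤ ‖a‖ ^ (-α)}
                    ≤ volume {a : F | s ≤ ‖a‖ ^ (-α)} := Measure.restrict_le_self _
                  _ ≤ volume (Metric.closedBall (0:F) (s ^ (-α⁻¹))) :=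
                      measure_mono (hsubset s hspos)
                  _ = ENNReal.ofReal (s ^ q) * B := by
                      rw [hB, Measure.addHaar_closedBall _ _ (by positivity), hfr]
                      congr 2
                      rw [← Real.rpow_natCast (s ^ (-α⁻¹)) m, ← Real.rpow_mul hspos.le, hq]
                      congr 1
                      field_simp
            _ = (∫⁻ s in Ioi s₀, ENNReal.ofReal (s ^ q)) * B := by
                rw [lintegral_mul_const _ (by fun_prop)]
            _ ≤ ENNReal.ofReal (t ^ ((m:ℝ) - α)) * (ENNReal.ofReal ((-(q + 1))⁻¹) * B) := by
                rw [← ofReal_integral_eq_lintegral_ofReal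
                  (integrableOn_Ioi_rpow_of_lt hq1 hs₀pos)
                  ((ae_restrict_mem measurableSet_Ioi).mono fun s hs =>
                    Real.rpow_nonneg (hs₀pos.trans hs).le _)]
                rw [integral_Ioi_rpow_of_lt hq1 hs₀pos]
                rw [neg_div, ← div_neg, div_eq_mul_inv, ← mul_assoc,
                  ← ENNReal.ofReal_mul (by positivity)]
                apply le_of_eq
                congr 2
                rw [hs₀, ← Real.rpow_mul ht.le]
                have hexp : -α * (q + 1) = (m:ℝ) - α := by
                  rw [hq]; field_simp; ring
                rw [hexp]
    _ = ENNReal.ofReal (t ^ ((m:ℝ) - α)) * (B + ENNReal.ofReal ((-(q + 1))⁻¹) * B) := by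
        rw [mul_add]


lemma card_lt_subtype (N k : ℕ) (hk : k ≤ N) :
    Fintype.card {i : Fin N // (i : ℕ) < k} = k := by
  have e : {i : Fin N // (i : ℕ) < k} ≃ Fin k :=
    { toFun := fun i => ⟨i.1.1, i.2⟩
      invFun := fun j => ⟨⟨j.1, lt_of_lt_of_le j.2 hk⟩, j.2⟩
      left_inv := fun i => by ext; rfl
      right_inv := fun j => rfl }
  rw [Fintype.card_congr e, Fintype.card_fin]

lemma card_not_lt_subtype (N k : ℕ) (hk : k ≤ N) :
    Fintype.card {i : Fin N // ¬ ((i : ℕ) < k)} = N - k := by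
  classical
  rw [Fintype.card_subtype_compl, Fintype.card_fin, card_lt_subtype N k hk]

lemma sum_split (N k : ℕ) (y : Fin N → ℝ) :
    ∑ i : Fin N, (if k ≤ (i : ℕ) then y i ^ 2 else 0)
      = ∑ j : {i : Fin N // ¬ ((i : ℕ) < k)}, y j.1 ^ 2 := by
  classical
  rw [← Finset.sum_filter]
  exact Finset.sum_subtype (Finset.univ.filter fun i : Fin N => k ≤ (i:ℕ))
    (by simp [not_lt]) (fun i => y i ^ 2)



lemma cube_bound (N k : ℕ) (hkN : k < N) (α : ℝ) (hα : 0 < α) (hαk : α < (N : ℝ) - k) :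
    ∃ D : ℝ≥0∞, D ≠ ∞ ∧ ∀ (c : EuclideanSpace ℝ (Fin N)) (t : ℝ), 0 < t →
      (∫⁻ y in Metric.ball c t,
          ENNReal.ofReal
            ((Real.sqrt (∑ i : Fin N, if k ≤ (i : ℕ) then (y i) ^ 2 else 0)) ^ (-α))) ≤
        ENNReal.ofReal (t ^ ((N : ℝ) - α)) * D := by
  classical
  have hcard : (Fintype.card {i : Fin N // ¬ ((i : ℕ) < k)} : ℝ) = (N : ℝ) - k := by
    rw [card_not_lt_subtype N k hkN.le, Nat.cast_sub hkN.le]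
  have hne : Nonempty {i : Fin N // ¬ ((i : ℕ) < k)} := by
    rw [← Fintype.card_pos_iff, card_not_lt_subtype N k hkN.le]; omega
  obtain ⟨D₁, hD₁fin, hD₁⟩ := ball_rpow_bound {i : Fin N // ¬ ((i : ℕ) < k)} α hα
    (by rw [hcard]; exact hαk)
  set B := volume (Metric.ball (0 : EuclideanSpace ℝ (Fin N)) 1) with hB
  refine ⟨B + ENNReal.ofReal (2 ^ k) * D₁, ENNReal.add_ne_top.2 ⟨measure_ball_lt_top.ne,
    ENNReal.mul_ne_top ENNReal.ofReal_ne_top hD₁fin⟩, ?_⟩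
  intro c t ht
  haveI : Nonempty (Fin N) := ⟨⟨0, by omega⟩⟩
  set g : EuclideanSpace ℝ (Fin N) → ℝ≥0∞ := fun y => ENNReal.ofReal
    ((Real.sqrt (∑ i : Fin N, if k ≤ (i : ℕ) then (y i) ^ 2 else 0)) ^ (-α)) with hgdef
  have hw : Measurable fun y : EuclideanSpace ℝ (Fin N) =>
      Real.sqrt (∑ i : Fin N, if k ≤ (i : ℕ) then (y i) ^ 2 else 0) := by
    apply Real.continuous_sqrt.measurable.comp
    apply Finset.measurable_sum
    intro i _
    by_cases h : k ≤ (i : ℕ) <;> simp [h]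
    exact (((measurable_pi_apply i).comp (WithLp.measurable_ofLp 2 _)).pow_const 2)
  set U : Set (EuclideanSpace ℝ (Fin N)) :=
    {y | Real.sqrt (∑ i : Fin N, if k ≤ (i : ℕ) then (y i) ^ 2 else 0) < t} with hU
  have hUmeas : MeasurableSet U := measurableSet_lt hw measurable_const
  set E : Set (EuclideanSpace ℝ (Fin N)) :=
    {y | ∀ i : Fin N, (i : ℕ) < k → |y i - c i| < t} ∩ U with hE
  -- pointwise bound on Uᶜ
  have hterm2 : (∫⁻ y in Metric.ball c t ∩ Uᶜ, g y) ≤ ENNReal.ofReal (t ^ ((N:ℝ) - α)) * B := by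
    calc (∫⁻ y in Metric.ball c t ∩ Uᶜ, g y)
        ≤ ∫⁻ _ in Metric.ball c t ∩ Uᶜ, ENNReal.ofReal (t ^ (-α)) := by
          refine setLIntegral_mono' (measurableSet_ball.inter hUmeas.compl) fun y hy => ?_
          have hyt : t ≤ Real.sqrt (∑ i : Fin N, if k ≤ (i : ℕ) then (y i) ^ 2 else 0) :=
            not_lt.1 hy.2
          exact ENNReal.ofReal_le_ofReal
            (Real.antitoneOn_rpow_Ioi_of_exponent_nonpos (neg_nonpos.2 hα.le)
              (mem_Ioi.2 ht) (mem_Ioi.2 (ht.trans_le hyt)) hyt)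
      _ = ENNReal.ofReal (t ^ (-α)) * volume (Metric.ball c t ∩ Uᶜ) := setLIntegral_const _ _
      _ ≤ ENNReal.ofReal (t ^ (-α)) * volume (Metric.ball c t) := by
          gcongr; exact inter_subset_left
      _ = ENNReal.ofReal (t ^ ((N:ℝ) - α)) * B := by
          rw [Measure.addHaar_ball _ _ ht.le, finrank_euclideanSpace_fin, ← mul_assoc,
            ← ENNReal.ofReal_mul (by positivity)]
          congr 2
          rw [← Real.rpow_natCast t N, ← Real.rpow_add ht]
          ring_nf
  -- the cube term
  have hsub : Metric.ball c t ∩ U ⊆ E := by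
    rintro y ⟨hy1, hy2⟩
    refine ⟨fun i hi => ?_, hy2⟩
    have hd : ‖y - c‖ < t := by rw [← dist_eq_norm]; exact mem_ball.1 hy1
    have habs : |y i - c i| ≤ ‖y - c‖ := by
      have hne : ‖y - c‖ = Real.sqrt (∑ j : Fin N, (y j - c j) ^ 2) := by
        rw [EuclideanSpace.norm_eq]
        congr 1
        refine Finset.sum_congr rfl fun j _ => ?_
        rw [PiLp.sub_apply, Real.norm_eq_abs, sq_abs]
      rw [hne, ← Real.sqrt_sq_eq_abs]
      apply Real.sqrt_le_sqrt
      exact Finset.single_le_sum (f := fun j => (y j - c j) ^ 2) (fun j _ => sq_nonneg _) (Finset.mem_univ i)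
    exact lt_of_le_of_lt habs hd
  have htermU : (∫⁻ y in E, g y) ≤
      ENNReal.ofReal (t ^ ((N:ℝ) - α)) * (ENNReal.ofReal (2 ^ k) * D₁) := by
    have mp1 := ((EuclideanSpace.volume_preserving_symm_measurableEquiv_toLp (Fin N)).symm :
      MeasurePreserving (MeasurableEquiv.toLp 2 (Fin N → ℝ)).symm.symm volume volume)
    set ψ := (MeasurableEquiv.toLp 2 (Fin N → ℝ)).symm.symm with hψ
    have mp2 := MeasureTheory.volume_preserving_piEquivPiSubtypeProd
      (fun _ : Fin N => ℝ) (fun i : Fin N => (i : ℕ) < k)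
    set e := MeasurableEquiv.piEquivPiSubtypeProd (fun _ : Fin N => ℝ)
      (fun i : Fin N => (i : ℕ) < k) with he
    set S₁ : Set ({i : Fin N // (i : ℕ) < k} → ℝ) :=
      Set.univ.pi fun i => Ioo (c i.1 - t) (c i.1 + t) with hS₁
    set S₂ : Set ({i : Fin N // ¬ ((i : ℕ) < k)} → ℝ) :=
      {v | Real.sqrt (∑ j, v j ^ 2) < t} with hS₂
    set H : ({i : Fin N // ¬ ((i : ℕ) < k)} → ℝ) → ℝ≥0∞ :=
      fun v => ENNReal.ofReal ((Real.sqrt (∑ j, v j ^ 2)) ^ (-α)) with hH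
    have hHmeas : Measurable H := by
      apply Measurable.ennreal_ofReal
      apply Measurable.comp (by fun_prop : Measurable fun w : ℝ => Real.sqrt w ^ (-α))
      exact Finset.measurable_sum _ fun j _ => (measurable_pi_apply j).pow_const 2
    have hEeq : ψ ⁻¹' E = e ⁻¹' (S₁ ×ˢ S₂) := by
      ext z
      have hψap : ∀ i : Fin N, ψ z i = z i := fun _ => rfl
      have he1 : ∀ i : {i : Fin N // (i : ℕ) < k}, (e z).1 i = z i.1 := fun _ => rfl
      have he2 : ∀ j : {i : Fin N // ¬ ((i : ℕ) < k)}, (e z).2 j = z j.1 := fun _ => rfl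
      simp only [Set.mem_preimage, hE, hU, hS₁, hS₂, Set.mem_inter_iff, Set.mem_setOf_eq,
        Set.mem_prod, Set.mem_pi, Set.mem_univ, Set.mem_Ioo, forall_true_left, hψap, he1, he2]
      constructor
      · rintro ⟨h1, h2⟩
        refine ⟨fun i => ?_, ?_⟩
        · have h3 : |z i.1 - c i.1| < t := h1 i.1 i.2
          have h4 := abs_lt.1 h3
          constructor <;> [linarith [h4.1]; linarith [h4.2]]
        · show Real.sqrt (∑ j : {i : Fin N // ¬ ((i : ℕ) < k)}, z j.1 ^ 2) < t
          rw [← sum_split N k z]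
          exact h2
      · rintro ⟨h1, h2⟩
        constructor
        · intro i hi
          have h3 := h1 ⟨i, hi⟩
          rw [abs_lt]
          constructor <;> [linarith [h3.1]; linarith [h3.2]]
        · show Real.sqrt (∑ i : Fin N, if k ≤ (i : ℕ) then z i ^ 2 else 0) < t
          rw [sum_split N k z]
          exact h2
    have hgψ : ∀ z : Fin N → ℝ, g (ψ z) = H (e z).2 := by
      intro z
      simp only [hgdef, hH]
      exact congrArg (fun w : ℝ => ENNReal.ofReal (Real.sqrt w ^ (-α))) (sum_split N k z)
    have hS1vol : volume S₁ ≤ ENNReal.ofReal ((2 * t) ^ k) := by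
      rw [hS₁, volume_pi_pi]
      have : ∀ i : {i : Fin N // (i : ℕ) < k},
          volume (Ioo (c i.1 - t) (c i.1 + t)) = ENNReal.ofReal (2 * t) := by
        intro i
        rw [Real.volume_Ioo]
        congr 1
        ring
      rw [Finset.prod_congr rfl fun i _ => this i, Finset.prod_const, Finset.card_univ,
        card_lt_subtype N k hkN.le, ← ENNReal.ofReal_pow (by positivity)]
    have hS2int : (∫⁻ v in S₂, H v) ≤ ENNReal.ofReal (t ^ (((N : ℝ) - k) - α)) * D₁ := by
      have mp3 := EuclideanSpace.volume_preserving_symm_measurableEquiv_toLp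
        {i : Fin N // ¬ ((i : ℕ) < k)}
      set φ := (MeasurableEquiv.toLp 2 ({i : Fin N // ¬ ((i : ℕ) < k)} → ℝ)).symm with hφ
      have htrans : (∫⁻ v in S₂, H v) = ∫⁻ u in φ ⁻¹' S₂, H (φ u) :=
        (mp3.setLIntegral_comp_preimage_emb φ.measurableEmbedding H S₂).symm
      have hS2eq : φ ⁻¹' S₂ =
          Metric.ball (0 : EuclideanSpace ℝ {i : Fin N // ¬ ((i : ℕ) < k)}) t := by
        ext u
        simp only [Set.mem_preimage, hS₂, Set.mem_setOf_eq, mem_ball_zero_iff,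
          EuclideanSpace.norm_eq, Real.norm_eq_abs, sq_abs]
        exact Iff.rfl
      have hHφ : ∀ u : EuclideanSpace ℝ {i : Fin N // ¬ ((i : ℕ) < k)},
          H (φ u) = ENNReal.ofReal (‖u‖ ^ (-α)) := by
        intro u
        simp only [hH, EuclideanSpace.norm_eq, Real.norm_eq_abs, sq_abs]
        rfl
      rw [htrans, hS2eq, lintegral_congr hHφ]
      have := hD₁ t ht
      rwa [hcard] at this
    calc (∫⁻ y in E, g y)
        = ∫⁻ z in ψ ⁻¹' E, g (ψ z) :=
          (mp1.setLIntegral_comp_preimage_emb ψ.measurableEmbedding g E).symm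
      _ = ∫⁻ z in e ⁻¹' (S₁ ×ˢ S₂), H (e z).2 := by
          rw [hEeq]; exact lintegral_congr fun z => hgψ z
      _ = ∫⁻ w in S₁ ×ˢ S₂, H w.2 :=
          mp2.setLIntegral_comp_preimage_emb e.measurableEmbedding (fun w => H w.2) (S₁ ×ˢ S₂)
      _ = volume S₁ * ∫⁻ v in S₂, H v := by
          rw [Measure.volume_eq_prod, ← Measure.prod_restrict]
          rw [lintegral_congr fun w : ({i : Fin N // (i : ℕ) < k} → ℝ) ×
            ({i : Fin N // ¬ ((i : ℕ) < k)} → ℝ) => (one_mul (H w.2)).symm]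
          rw [lintegral_prod_mul aemeasurable_const hHmeas.aemeasurable]
          rw [lintegral_one, Measure.restrict_apply_univ]
      _ ≤ ENNReal.ofReal ((2 * t) ^ k) * (ENNReal.ofReal (t ^ (((N : ℝ) - k) - α)) * D₁) := by
          gcongr
      _ = ENNReal.ofReal (t ^ ((N:ℝ) - α)) * (ENNReal.ofReal (2 ^ k) * D₁) := by
          have hre : (2 * t) ^ k * t ^ (((N:ℝ) - k) - α) = t ^ ((N:ℝ) - α) * 2 ^ k := by
            rw [mul_pow, ← Real.rpow_natCast t k, mul_assoc, ← Real.rpow_add ht,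
              show (k:ℝ) + (((N:ℝ) - k) - α) = (N:ℝ) - α by ring]
            ring
          rw [← mul_assoc, ← ENNReal.ofReal_mul (by positivity), hre,
            ENNReal.ofReal_mul (by positivity), mul_assoc]
  calc (∫⁻ y in Metric.ball c t, g y)
      ≤ ∫⁻ y in (Metric.ball c t ∩ U) ∪ (Metric.ball c t ∩ Uᶜ), g y :=
        lintegral_mono_set (by rw [← inter_union_distrib_left, union_compl_self, inter_univ])
    _ ≤ (∫⁻ y in Metric.ball c t ∩ U, g y) + ∫⁻ y in Metric.ball c t ∩ Uᶜ, g y :=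
        lintegral_union_le _ _ _
    _ ≤ (∫⁻ y in E, g y) + ∫⁻ y in Metric.ball c t ∩ Uᶜ, g y := by
        gcongr
    _ ≤ ENNReal.ofReal (t ^ ((N:ℝ) - α)) * (ENNReal.ofReal (2 ^ k) * D₁)
        + ENNReal.ofReal (t ^ ((N:ℝ) - α)) * B := add_le_add htermU hterm2
    _ = ENNReal.ofReal (t ^ ((N:ℝ) - α)) * (B + ENNReal.ofReal (2 ^ k) * D₁) := by
        rw [← mul_add, add_comm]



theorem stmt_10 (N k : ℕ) (hN : 3 ≤ N) (hk : k + 2 < N) (α γ : ℝ)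
    (hα : 0 < α) (hαγ : α < γ) (hγ : γ < (N : ℝ)) (hαk : α < (N : ℝ) - k) :
    ∃ Cb : ℝ, ∀ (x : EuclideanSpace ℝ (Fin N)) (lam : ℝ),
      Real.sqrt (∑ i : Fin N, if k ≤ (i : ℕ) then (x i) ^ 2 else 0) ≠ 0 → 0 < lam →
      (∫ y in {y : EuclideanSpace ℝ (Fin N) |
            y ∈ Metric.ball (0 : EuclideanSpace ℝ (Fin N)) 1 ∧ y ≠ x ∧
              lam < ‖x - y‖ ^ (-(N : ℝ) + γ)},
          (Real.sqrt (∑ i : Fin N, if k ≤ (i : ℕ) then (y i) ^ 2 else 0)) ^ (-α)) ≤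
        Cb * lam ^ (-(((N : ℝ) - α) / ((N : ℝ) - γ))) := by
  obtain ⟨D, hDfin, hD⟩ := cube_bound N k (by omega) α hα hαk
  refine ⟨D.toReal, ?_⟩
  intro x lam _ hlam
  set β := (N : ℝ) - γ with hβ
  have hβpos : 0 < β := by rw [hβ]; linarith
  set r := lam ^ (-β⁻¹) with hr
  have hrpos : 0 < r := Real.rpow_pos_of_pos hlam _
  set A := {y : EuclideanSpace ℝ (Fin N) |
      y ∈ Metric.ball (0 : EuclideanSpace ℝ (Fin N)) 1 ∧ y ≠ x ∧
        lam < ‖x - y‖ ^ (-(N : ℝ) + γ)} with hA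
  have hAr : A ⊆ Metric.ball x r := by
    rintro y ⟨-, hyx, hyl⟩
    have h0 : 0 < ‖x - y‖ := norm_pos_iff.2 (sub_ne_zero.2 hyx.symm)
    have hexp : (-(N : ℝ) + γ) = -β := by rw [hβ]; ring
    rw [hexp, Real.rpow_neg h0.le] at hyl
    have h1 : ‖x - y‖ ^ β < lam⁻¹ := by
      rw [← inv_inv (‖x - y‖ ^ β)]
      exact inv_strictAnti₀ hlam hyl
    have h2 : ‖x - y‖ < r := by
      have h3 := Real.rpow_lt_rpow (by positivity) h1 (by positivity : (0:ℝ) < β⁻¹)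
      rwa [← Real.rpow_mul h0.le, mul_inv_cancel₀ hβpos.ne', Real.rpow_one,
        ← Real.rpow_neg_one lam, ← Real.rpow_mul hlam.le, neg_one_mul] at h3
    rw [Metric.mem_ball, dist_eq_norm, ← norm_sub_rev]
    exact h2
  set t := min r 1 with htdef
  have htpos : 0 < t := lt_min hrpos one_pos
  set c := if r ≤ 1 then x else 0 with hc
  have hAc : A ⊆ Metric.ball c t := by
    by_cases h1 : r ≤ 1
    · rw [hc, if_pos h1, htdef, min_eq_left h1]; exact hAr
    · rw [hc, if_neg h1, htdef, min_eq_right (le_of_not_ge h1)]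
      exact fun y hy => hy.1
  have hgmeas : Measurable fun y : EuclideanSpace ℝ (Fin N) =>
      (Real.sqrt (∑ i : Fin N, if k ≤ (i : ℕ) then (y i) ^ 2 else 0)) ^ (-α) := by
    apply Measurable.comp (by fun_prop : Measurable fun w : ℝ => Real.sqrt w ^ (-α))
    apply Finset.measurable_sum
    intro i _
    by_cases h : k ≤ (i : ℕ) <;> simp [h]
    exact ((measurable_pi_apply i).comp (WithLp.measurable_ofLp 2 _)).pow_const 2
  rw [MeasureTheory.integral_eq_lintegral_of_nonneg_ae
    (Filter.Eventually.of_forall fun y => Real.rpow_nonneg (Real.sqrt_nonneg _) _)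
    hgmeas.aestronglyMeasurable]
  have hle : (∫⁻ y in A, ENNReal.ofReal
      ((Real.sqrt (∑ i : Fin N, if k ≤ (i : ℕ) then (y i) ^ 2 else 0)) ^ (-α))) ≤
      ENNReal.ofReal (r ^ ((N : ℝ) - α)) * D :=
    calc (∫⁻ y in A, ENNReal.ofReal
        ((Real.sqrt (∑ i : Fin N, if k ≤ (i : ℕ) then (y i) ^ 2 else 0)) ^ (-α)))
        ≤ ∫⁻ y in Metric.ball c t, ENNReal.ofReal
          ((Real.sqrt (∑ i : Fin N, if k ≤ (i : ℕ) then (y i) ^ 2 else 0)) ^ (-α)) :=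
          lintegral_mono_set hAc
      _ ≤ ENNReal.ofReal (t ^ ((N : ℝ) - α)) * D := hD c t htpos
      _ ≤ ENNReal.ofReal (r ^ ((N : ℝ) - α)) * D := by
          have h4 : t ^ ((N : ℝ) - α) ≤ r ^ ((N : ℝ) - α) :=
            Real.rpow_le_rpow htpos.le (min_le_left _ _) (by linarith)
          gcongr
  have hfin : ENNReal.ofReal (r ^ ((N : ℝ) - α)) * D ≠ ⊤ :=
    ENNReal.mul_ne_top ENNReal.ofReal_ne_top hDfin
  have hmono := ENNReal.toReal_mono hfin hle
  refine le_trans hmono ?_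
  rw [ENNReal.toReal_mul, ENNReal.toReal_ofReal (by positivity)]
  have hreq : r ^ ((N : ℝ) - α) = lam ^ (-(((N : ℝ) - α) / ((N : ℝ) - γ))) := by
    rw [hr, ← Real.rpow_mul hlam.le]
    congr 1
    rw [hβ]
    field_simp
  rw [hreq, mul_comm]
end
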